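/- With the matrices A, X, Y₁, …, Y_{2n} defined as in the context, the following commutator identities hold in gl(2n+2, ℂ): [A, X] = c·X; for every 1 ≤ j ≤ n, [A, Y_j] = Σ_{i=1}^{n} Re(Δ_{ij})·Y_i + Σ_{i=1}^{n} Im(Δ_{ij})·Y_{n+i} and [A, Y_{n+j}] = −Σ_{i=1}^{n} Im(Δ_{ij})·Y_i + Σ_{i=1}^{n} Re(Δ_{ij})·Y_{n+i}; [X, Y_j] = 0 for all 1 ≤ j ≤ 2n; and [Y_j, Y_k] = 0 for all 1 ≤ j, k ≤ 2n. -/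

import Mathlib

/-!
Statement 3: commutator identities in `gl(2n+2, ℂ)` for the generators
`A = blockdiag(c, Δ, conj Δ, 0)`, `X`, `Y₁, …, Y_{2n}` of the Lie algebra of the
solvable group realizing the Endo–Pajitnov manifold.
-/

open Matrix
set_option maxHeartbeats 2000000

/-- The index type for the `(2n+2) × (2n+2)` block matrices, with blocks of
sizes `1, n, n, 1`. -/
abbrev EPIdx (n : ℕ) := (Unit ⊕ Fin n) ⊕ (Fin n ⊕ Unit)

/-- The commutator bracket on matrices. -/
noncomputable def brk {m : Type*} [Fintype m] (P Q : Matrix m m ℂ) : Matrix m m ℂ := P * Q - Q * P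

/-- `A = blockdiag(c, Δ, conj Δ, 0)`, diagonal blocks of sizes `1, n, n, 1`. -/
noncomputable def Agen (n : ℕ) (c : ℝ) (Δ : Matrix (Fin n) (Fin n) ℂ) :
    Matrix (EPIdx n) (EPIdx n) ℂ :=
  Matrix.fromBlocks
    (Matrix.fromBlocks (Matrix.of fun _ _ => (c : ℂ)) 0 0 Δ) 0 0
    (Matrix.fromBlocks (Δ.map (starRingEnd ℂ)) 0 0 0)

/-- `X`: only nonzero entry is `1` in position `(1, 2n+2)`. -/
noncomputable def Xgen (n : ℕ) : Matrix (EPIdx n) (EPIdx n) ℂ :=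
  Matrix.fromBlocks 0 (Matrix.fromBlocks 0 (Matrix.of fun _ _ => (1 : ℂ)) 0 0) 0 0

/-- `Y_j` (for `1 ≤ j ≤ n`): only nonzero entries are `1` in positions
`(1+j, 2n+2)` and `(n+1+j, 2n+2)`. -/
noncomputable def Ygen (n : ℕ) (j : Fin n) : Matrix (EPIdx n) (EPIdx n) ℂ :=
  Matrix.fromBlocks 0
    (Matrix.fromBlocks 0 0 0 (Matrix.replicateCol Unit (Pi.single j (1 : ℂ)))) 0
    (Matrix.fromBlocks 0 (Matrix.replicateCol Unit (Pi.single j (1 : ℂ))) 0 0)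

/-- `Y_{n+j}` (for `1 ≤ j ≤ n`): only nonzero entries are `i` in position
`(1+j, 2n+2)` and `−i` in position `(n+1+j, 2n+2)`. -/
noncomputable def Ygen' (n : ℕ) (j : Fin n) : Matrix (EPIdx n) (EPIdx n) ℂ :=
  Matrix.fromBlocks 0
    (Matrix.fromBlocks 0 0 0 (Matrix.replicateCol Unit (Pi.single j Complex.I))) 0
    (Matrix.fromBlocks 0 (Matrix.replicateCol Unit (Pi.single j (-Complex.I))) 0 0)

theorem EP_structure_equations (n : ℕ) (hn : 1 ≤ n) (c : ℝ)
    (Δ : Matrix (Fin n) (Fin n) ℂ) :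
    brk (Agen n c Δ) (Xgen n) = (c : ℂ) • Xgen n ∧
    (∀ j : Fin n,
      brk (Agen n c Δ) (Ygen n j) =
        ∑ i : Fin n, ((Δ i j).re : ℂ) • Ygen n i +
          ∑ i : Fin n, ((Δ i j).im : ℂ) • Ygen' n i) ∧
    (∀ j : Fin n,
      brk (Agen n c Δ) (Ygen' n j) =
        -∑ i : Fin n, ((Δ i j).im : ℂ) • Ygen n i +
          ∑ i : Fin n, ((Δ i j).re : ℂ) • Ygen' n i) ∧
    (∀ j : Fin n, brk (Xgen n) (Ygen n j) = 0 ∧ brk (Xgen n) (Ygen' n j) = 0) ∧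
    (∀ j k : Fin n,
      brk (Ygen n j) (Ygen n k) = 0 ∧ brk (Ygen n j) (Ygen' n k) = 0 ∧
      brk (Ygen' n j) (Ygen n k) = 0 ∧ brk (Ygen' n j) (Ygen' n k) = 0) := by
  refine ⟨?_, ?_, ?_, ?_, ?_⟩
  · ext a b
    rcases a with (a|a)|(a|a) <;> rcases b with (b|b)|(b|b) <;>
      simp [brk, Agen, Xgen, Matrix.mul_apply, Fintype.sum_sum_type, Matrix.fromBlocks]
  · intro j
    ext a b
    rcases a with (a|a)|(a|a) <;> rcases b with (b|b)|(b|b) <;>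
      simp [brk, Agen, Ygen, Ygen', Matrix.mul_apply, Fintype.sum_sum_type, Matrix.fromBlocks,
        Matrix.sum_apply, Pi.single_apply, Finset.mul_sum, Matrix.replicateCol, mul_ite,
        Complex.ext_iff, Complex.mul_re, Complex.mul_im]
  · intro j
    ext a b
    rcases a with (a|a)|(a|a) <;> rcases b with (b|b)|(b|b) <;>
      simp [brk, Agen, Ygen, Ygen', Matrix.mul_apply, Fintype.sum_sum_type, Matrix.fromBlocks,
        Matrix.sum_apply, Pi.single_apply, Finset.mul_sum, Matrix.replicateCol, mul_ite,
        Complex.ext_iff, Complex.mul_re, Complex.mul_im]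
  · intro j
    constructor <;>
    · ext a b
      rcases a with (a|a)|(a|a) <;> rcases b with (b|b)|(b|b) <;>
        simp [brk, Xgen, Ygen, Ygen', Matrix.mul_apply, Fintype.sum_sum_type, Matrix.fromBlocks,
          Matrix.replicateCol]
  · intro j k
    refine ⟨?_, ?_, ?_, ?_⟩ <;>
    · ext a b
      rcases a with (a|a)|(a|a) <;> rcases b with (b|b)|(b|b) <;>
        simp [brk, Ygen, Ygen', Matrix.mul_apply, Fintype.sum_sum_type, Matrix.fromBlocks,
          Matrix.replicateCol]
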